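/- Let Σ be an n × n Hermitian complex matrix and let λ ∈ ℂ with Re λ ≥ 0. Then the matrix 1 + i·√λ·Σ is invertible, and its inverse satisfies the operator-norm bound ‖(1 + i·√λ·Σ)^{−1}‖ ≤ √2, where ‖·‖ denotes the operator norm induced by the Euclidean (ℓ²) norm on ℂⁿ. (Resolvent bound for Hermitian matrices.) -/

import Mathlib

open Complex

private lemma sqrt_im_le_re {lam : ℂ} (hlam : 0 ≤ lam.re) :
    |((lam : ℂ) ^ (1 / 2 : ℂ)).im| ≤ (lam ^ (1 / 2 : ℂ)).re := by
  rw [show (1 / 2 : ℂ) = (2⁻¹ : ℂ) by norm_num, Complex.abs_cpow_inv_two_im,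
    Complex.cpow_inv_two_re]
  apply Real.sqrt_le_sqrt
  linarith

private lemma scalar_bound {w : ℂ} (hw : 0 ≤ w.re) (hw2 : |w.im| ≤ w.re)
    (c t : ℝ) (hc : 0 ≤ c) :
    c ≤ Real.sqrt 2 * ‖(c : ℂ) + Complex.I * w * (t : ℂ)‖ := by
  have hab : w.im ^ 2 ≤ w.re ^ 2 := by
    nlinarith [abs_nonneg w.im, _root_.sq_abs w.im, abs_le.mp hw2]
  have habs : (‖(c : ℂ) + Complex.I * w * (t : ℂ)‖) ^ 2
      = (c - w.im * t) ^ 2 + (w.re * t) ^ 2 := by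
    rw [Complex.sq_norm, Complex.normSq_apply]
    simp
    ring
  have h2 : c ^ 2 ≤ 2 * (‖(c : ℂ) + Complex.I * w * (t : ℂ)‖) ^ 2 := by
    rw [habs]
    nlinarith [sq_nonneg (c - 2 * w.im * t), sq_nonneg t, mul_nonneg
      (sub_nonneg.mpr hab) (sq_nonneg t)]
  calc c = Real.sqrt (c ^ 2) := (Real.sqrt_sq hc).symm
    _ ≤ Real.sqrt (2 * (‖(c : ℂ) + Complex.I * w * (t : ℂ)‖) ^ 2) :=
        Real.sqrt_le_sqrt h2
    _ = Real.sqrt 2 * ‖(c : ℂ) + Complex.I * w * (t : ℂ)‖ := by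
        rw [Real.sqrt_mul (by norm_num), Real.sqrt_sq (norm_nonneg _)]

theorem hermitian_resolvent_bound (n : ℕ) (lam : ℂ) (hlam : 0 ≤ lam.re)
    (S : Matrix (Fin n) (Fin n) ℂ) (hS : S.IsHermitian) :
    IsUnit (1 + (Complex.I * lam ^ (1 / 2 : ℂ)) • S) ∧
    ‖Matrix.toEuclideanCLM (𝕜 := ℂ) (n := Fin n)
        ((1 + (Complex.I * lam ^ (1 / 2 : ℂ)) • S)⁻¹)‖ ≤ Real.sqrt 2 := by
  set w : ℂ := lam ^ (1 / 2 : ℂ) with hw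
  have hwre : 0 ≤ w.re := by
    rw [hw, show (1 / 2 : ℂ) = (2⁻¹ : ℂ) by norm_num, Complex.cpow_inv_two_re]
    exact Real.sqrt_nonneg _
  have hwim : |w.im| ≤ w.re := sqrt_im_le_re hlam
  set A : Matrix (Fin n) (Fin n) ℂ := 1 + (Complex.I * w) • S with hA
  set T := Matrix.toEuclideanCLM (𝕜 := ℂ) (n := Fin n) A with hT
  set TS := Matrix.toEuclideanCLM (𝕜 := ℂ) (n := Fin n) S with hTS
  -- T = 1 + (I*w) • TS
  have hTeq : T = 1 + (Complex.I * w) • TS := by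
    rw [hT, hA, map_add, map_one, map_smul]
  -- TS is self-adjoint
  have hTSsa : IsSelfAdjoint TS := by
    have hSsa : IsSelfAdjoint S := hS
    exact hTS ▸ hSsa.map (Matrix.toEuclideanCLM (𝕜 := ℂ) (n := Fin n))
  have hsym := ContinuousLinearMap.isSelfAdjoint_iff_isSymmetric.mp hTSsa
  -- key estimate
  have key : ∀ x : EuclideanSpace ℂ (Fin n), ‖x‖ ≤ Real.sqrt 2 * ‖T x‖ := by
    intro x
    rcases eq_or_ne x 0 with rfl | hx
    · simp [Real.sqrt_nonneg]
    have him : (inner ℂ x (TS x) : ℂ).im = 0 := by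
      have h1 : (starRingEnd ℂ) (inner ℂ x (TS x) : ℂ) = inner ℂ x (TS x) := by
        rw [inner_conj_symm]
        exact hsym x x
      rw [Complex.conj_eq_iff_im] at h1
      exact h1
    have hinner : (inner ℂ x (T x) : ℂ)
        = ((‖x‖ ^ 2 : ℝ) : ℂ) + Complex.I * w * (((inner ℂ x (TS x) : ℂ).re : ℝ) : ℂ) := by
      rw [hTeq]
      simp only [ContinuousLinearMap.add_apply, ContinuousLinearMap.one_apply,
        ContinuousLinearMap.smul_apply, inner_add_right, inner_smul_right]
      rw [inner_self_eq_norm_sq_to_K (𝕜 := ℂ)]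
      congr 1
      · norm_cast
      · congr 1
        exact (Complex.re_add_im _).symm.trans (by rw [him]; simp)
    have hb : ‖x‖ ^ 2 ≤ Real.sqrt 2 * ‖(inner ℂ x (T x) : ℂ)‖ := by
      have := scalar_bound hwre hwim (‖x‖ ^ 2) ((inner ℂ x (TS x) : ℂ).re) (by positivity)
      rw [hinner]
      simpa using this
    have hcs : ‖(inner ℂ x (T x) : ℂ)‖ ≤ ‖x‖ * ‖T x‖ := norm_inner_le_norm x (T x)
    have hxpos : (0 : ℝ) < ‖x‖ := norm_pos_iff.mpr hx
    have : ‖x‖ ^ 2 ≤ Real.sqrt 2 * (‖x‖ * ‖T x‖) := by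
      refine hb.trans ?_
      exact mul_le_mul_of_nonneg_left hcs (Real.sqrt_nonneg 2)
    nlinarith
  -- invertibility
  have hdet : A.det ≠ 0 := by
    intro hdet0
    obtain ⟨v, hv, hv0⟩ := (Matrix.exists_mulVec_eq_zero_iff).mpr hdet0
    have hTv : T ((WithLp.equiv 2 (Fin n → ℂ)).symm v) = 0 := by
      rw [hT, WithLp.equiv_symm_apply, Matrix.toEuclideanCLM_toLp]
      rw [hv0]
      simp
    have := key ((WithLp.equiv 2 (Fin n → ℂ)).symm v)
    rw [hTv] at this
    simp at this
    exact hv (by simpa using this)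
  have hunit : IsUnit A := (Matrix.isUnit_iff_isUnit_det A).mpr (isUnit_iff_ne_zero.mpr hdet)
  refine ⟨hunit, ?_⟩
  -- inverse bound
  have hdet' : IsUnit A.det := isUnit_iff_ne_zero.mpr hdet
  have hmul : A * A⁻¹ = 1 := Matrix.mul_nonsing_inv A hdet'
  set B := Matrix.toEuclideanCLM (𝕜 := ℂ) (n := Fin n) A⁻¹ with hB
  have hTB : T * B = 1 := by
    rw [hT, hB, ← map_mul, hmul, map_one]
  refine ContinuousLinearMap.opNorm_le_bound _ (Real.sqrt_nonneg 2) (fun y => ?_)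
  have : T (B y) = y := by
    have := congrArg (fun f => f y) hTB
    simpa [ContinuousLinearMap.mul_apply] using this
  calc ‖B y‖ ≤ Real.sqrt 2 * ‖T (B y)‖ := key (B y)
    _ = Real.sqrt 2 * ‖y‖ := by rw [this]
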